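/- Let Δ be a convex union representable simplicial complex with n ≥ 1 vertices and vertex set [n] = {1,…,n}. Then the Alexander dual Δ* = {σ ⊆ [n] : [n]∖σ ∉ Δ} is collapsible. -/

import Mathlib

open Set

/-- An abstract simplicial complex on ground set `V`: a collection of finite
subsets of `V` that is closed under inclusion. -/
def IsSimplicialComplex {V : Type*} (Δ : Set (Finset V)) : Prop :=
  ∀ σ ∈ Δ, ∀ τ : Finset V, τ ⊆ σ → τ ∈ Δ

/-- The nerve of a collection of sets `U i`: the faces are the finite sets `σ`
of indices such that `⋂ i ∈ σ, U i ≠ ∅`, where by convention the empty face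
belongs to the nerve iff some `U i` is nonempty. -/
def nerveOf {V E : Type*} (U : V → Set E) : Set (Finset V) :=
  {σ | (∃ i, (U i).Nonempty) ∧ ∃ x, ∀ i ∈ σ, x ∈ U i}

/-- A facet of `Δ` is an inclusion-maximal face. -/
def IsFacet {V : Type*} (Δ : Set (Finset V)) (σ : Finset V) : Prop :=
  σ ∈ Δ ∧ ∀ τ ∈ Δ, σ ⊆ τ → τ = σ

/-- A free face of `Δ`: a face that is not a facet and is contained in a
unique facet. -/
def IsFreeFace {V : Type*} (Δ : Set (Finset V)) (σ : Finset V) : Prop :=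
  σ ∈ Δ ∧ ¬ IsFacet Δ σ ∧ ∃! τ : Finset V, IsFacet Δ τ ∧ σ ⊆ τ

/-- An elementary collapse removes from `Δ` all faces containing a free face. -/
def ElemCollapse {V : Type*} (Δ Γ : Set (Finset V)) : Prop :=
  ∃ σ : Finset V, IsFreeFace Δ σ ∧ Γ = {τ ∈ Δ | ¬ σ ⊆ τ}

/-- `Δ` collapses onto `Γ` if a (finite) sequence of elementary collapses
leads from `Δ` to `Γ`. -/
def CollapsesTo {V : Type*} (Δ Γ : Set (Finset V)) : Prop :=
  Relation.ReflTransGen ElemCollapse Δ Γ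

/-- `Δ` is collapsible if it collapses onto the void complex. -/
def Collapsible {V : Type*} (Δ : Set (Finset V)) : Prop :=
  CollapsesTo Δ (∅ : Set (Finset V))

/-- Euclidean space `ℝ^d`. -/
abbrev Euc (d : ℕ) : Type := EuclideanSpace ℝ (Fin d)

/-- `U` is a `d`-convex union representation of `Δ`: the `U i` are convex open
sets in `ℝ^d`, their union is convex, and their nerve is `Δ`. -/
def IsCURep {V : Type*} {d : ℕ} (U : V → Set (Euc d)) (Δ : Set (Finset V)) : Prop :=
  (∀ i, Convex ℝ (U i)) ∧ (∀ i, IsOpen (U i)) ∧ Convex ℝ (⋃ i, U i) ∧ nerveOf U = Δ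

/-- `Δ` is `d`-convex union representable. -/
def IsCUR {V : Type*} (d : ℕ) (Δ : Set (Finset V)) : Prop :=
  ∃ U : V → Set (Euc d), IsCURep U Δ

/-- `Δ` is convex union representable: `d`-convex union representable for some `d`. -/
def ConvexUnionRepresentable {V : Type*} (Δ : Set (Finset V)) : Prop :=
  ∃ d : ℕ, IsCUR d Δ

/-- `Δ` is `d`-representable: the nerve of a family of convex sets in `ℝ^d`. -/
def IsRep {V : Type*} (d : ℕ) (Δ : Set (Finset V)) : Prop :=
  ∃ U : V → Set (Euc d), (∀ i, Convex ℝ (U i)) ∧ nerveOf U = Δ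

/-- The Alexander dual of a complex `Δ` on ground set `Fin n`:
`Δ* = {σ ⊆ [n] : [n] ∖ σ ∉ Δ}`. -/
def alexDual {n : ℕ} (Δ : Set (Finset (Fin n))) : Set (Finset (Fin n)) :=
  {σ : Finset (Fin n) | σᶜ ∉ Δ}

open Metric

namespace CURproof


variable {n : ℕ}

theorem _root_.Set.Finite.exists_maximal_wrt {α β : Type*} [PartialOrder β] (f : α → β)
    (s : Set α) (h : s.Finite) (hs : s.Nonempty) :
    ∃ a ∈ s, ∀ a' ∈ s, f a ≤ f a' → f a = f a' := by
  obtain ⟨a, ha, hmax⟩ := Set.Finite.exists_maximalFor f s h hs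
  exact ⟨a, ha, fun a' h' hle => le_antisymm hle (hmax h' hle)⟩

lemma dc_of_elem {X Y : Set (Finset (Fin n))} (hX : IsSimplicialComplex X)
    (h : ElemCollapse X Y) : IsSimplicialComplex Y := by
  obtain ⟨σ, _, rfl⟩ := h
  intro τ hτ η hη
  exact ⟨hX τ hτ.1 η hη, fun hστ => hτ.2 (hστ.trans hη)⟩

lemma dc_of_chain {X Y : Set (Finset (Fin n))} (hX : IsSimplicialComplex X)
    (h : CollapsesTo X Y) : IsSimplicialComplex Y := by
  induction h with
  | refl => exact hX
  | tail _ hbc ih => exact dc_of_elem ih hbc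

lemma exists_facet {X : Set (Finset (Fin n))} (τ : Finset (Fin n)) (hτ : τ ∈ X) :
    ∃ F, IsFacet X F ∧ τ ⊆ F := by
  have hfin : {μ ∈ X | τ ⊆ μ}.Finite := Set.toFinite _
  obtain ⟨F, hF, hmax⟩ := hfin.exists_maximal_wrt id _ ⟨τ, hτ, subset_rfl⟩
  exact ⟨F, ⟨hF.1, fun μ hμ hFμ => (hmax μ ⟨hμ, hF.2.trans hFμ⟩ hFμ).symm⟩, hF.2⟩

lemma interval_lemma {X : Set (Finset (Fin n))} (hdc : IsSimplicialComplex X)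
    {σ F : Finset (Fin n)} (hσX : σ ∈ X)
    (huniq : ∀ G, IsFacet X G ∧ σ ⊆ G → G = F) (hF : IsFacet X F) (hσF : σ ⊆ F) :
    ∀ τ, (τ ∈ X ∧ σ ⊆ τ) ↔ (σ ⊆ τ ∧ τ ⊆ F) := by
  intro τ
  constructor
  · rintro ⟨hτX, hστ⟩
    obtain ⟨G, hG, hτG⟩ := exists_facet τ hτX
    have hGF : G = F := huniq G ⟨hG, hστ.trans hτG⟩
    exact ⟨hστ, hGF ▸ hτG⟩
  · rintro ⟨hστ, hτF⟩
    exact ⟨hdc F hF.1 τ hτF, hστ⟩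

lemma compl_subset_flip {s t : Finset (Fin n)} (h : sᶜ ⊆ t) : tᶜ ⊆ s := by
  have := Finset.compl_subset_compl.2 h
  simpa using this

lemma dual_elem {X Y : Set (Finset (Fin n))} (hdc : IsSimplicialComplex X)
    (h : ElemCollapse X Y) : ElemCollapse (alexDual Y) (alexDual X) := by
  obtain ⟨σ, ⟨hσX, hnf, F, ⟨hF, hσF⟩, huniq'⟩, rfl⟩ := h
  have huniq : ∀ G, IsFacet X G ∧ σ ⊆ G → G = F := fun G hG =>
    (huniq' G hG).trans (huniq' F ⟨hF, hσF⟩).symm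
  have hint := interval_lemma hdc hσX huniq hF hσF
  have hσneF : σ ≠ F := fun h => hnf (h ▸ hF)
  -- membership unfolding
  have hmemY : ∀ ζ : Finset (Fin n),
      ζ ∈ alexDual {τ ∈ X | ¬ σ ⊆ τ} ↔ ¬ (ζᶜ ∈ X ∧ ¬ σ ⊆ ζᶜ) := fun ζ => Iff.rfl
  have hFc : (Fᶜ : Finset (Fin n)) ∈ alexDual {τ ∈ X | ¬ σ ⊆ τ} := by
    rw [hmemY]
    rintro ⟨h1, h2⟩
    rw [compl_compl] at h2
    exact h2 hσF
  have hσc : (σᶜ : Finset (Fin n)) ∈ alexDual {τ ∈ X | ¬ σ ⊆ τ} := by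
    rw [hmemY]
    rintro ⟨h1, h2⟩
    rw [compl_compl] at h2
    exact h2 subset_rfl
  have hFcσc : (Fᶜ : Finset (Fin n)) ⊆ σᶜ := Finset.compl_subset_compl.2 hσF
  have hFcneσc : (Fᶜ : Finset (Fin n)) ≠ σᶜ := by
    intro h
    apply hσneF
    have h2 := congrArg (fun s : Finset (Fin n) => sᶜ) h
    simp only [compl_compl] at h2
    exact h2.symm
  -- cofaces of Fᶜ in the dual are exactly the interval [Fᶜ, σᶜ]
  have hcof : ∀ ζ : Finset (Fin n), (ζ ∈ alexDual {τ ∈ X | ¬ σ ⊆ τ} ∧ Fᶜ ⊆ ζ) ↔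
      (Fᶜ ⊆ ζ ∧ ζ ⊆ σᶜ) := by
    intro ζ
    constructor
    · rintro ⟨hζ, hFζ⟩
      have hζF : ζᶜ ⊆ F := compl_subset_flip hFζ
      have hζX : ζᶜ ∈ X := hdc F hF.1 _ hζF
      rw [hmemY] at hζ
      have hσζ : σ ⊆ ζᶜ := by
        by_contra hcon
        exact hζ ⟨hζX, hcon⟩
      exact ⟨hFζ, by simpa using Finset.compl_subset_compl.2 hσζ⟩
    · rintro ⟨hFζ, hζσ⟩
      refine ⟨?_, hFζ⟩
      rw [hmemY]
      rintro ⟨h1, h2⟩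
      exact h2 (by simpa using Finset.compl_subset_compl.2 hζσ)
  refine ⟨Fᶜ, ⟨hFc, ?_, ⟨σᶜ, ⟨⟨hσc, ?_⟩, hFcσc⟩, ?_⟩⟩, ?_⟩
  · rintro ⟨-, hfac⟩
    exact hFcneσc (hfac σᶜ hσc hFcσc).symm
  · -- σᶜ is a facet
    intro ζ hζ hσcζ
    have := (hcof ζ).1 ⟨hζ, hFcσc.trans hσcζ⟩
    exact subset_antisymm this.2 hσcζ
  · -- uniqueness
    rintro ζ ⟨hζfac, hFζ⟩
    have hint2 := (hcof ζ).1 ⟨hζfac.1, hFζ⟩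
    exact (hζfac.2 σᶜ hσc hint2.2).symm ▸ rfl
  · -- the removal equality
    ext ζ
    simp only [Set.mem_setOf_eq, Set.mem_sep_iff]
    constructor
    · intro hζ
      have hζ' : ζᶜ ∉ X := hζ
      constructor
      · rw [hmemY]; rintro ⟨h1, -⟩; exact hζ' h1
      · intro hFζ
        exact hζ' (hdc F hF.1 _ (compl_subset_flip hFζ))
    · rintro ⟨h1, h2⟩
      intro hζX
      rw [hmemY] at h1
      have hσζ : σ ⊆ ζᶜ := by
        by_contra hcon
        exact h1 ⟨hζX, hcon⟩
      have : ζᶜ ⊆ F := ((hint ζᶜ).1 ⟨hζX, hσζ⟩).2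
      exact h2 (by simpa using Finset.compl_subset_compl.2 this)

lemma dual_chain {X Y : Set (Finset (Fin n))} (hdc : IsSimplicialComplex X)
    (h : CollapsesTo X Y) : CollapsesTo (alexDual Y) (alexDual X) := by
  induction h with
  | refl => exact .refl
  | tail hab hbc ih =>
      exact Relation.ReflTransGen.head (dual_elem (dc_of_chain hdc hab) hbc) ih

lemma alexDual_univ : alexDual (Set.univ : Set (Finset (Fin n))) = ∅ := by
  ext σ; simp [alexDual]



variable {n d : ℕ}

noncomputable def ff (V : Fin n → Set (Euc d)) (σ : Finset (Fin n)) (x : Euc d) : ℝ :=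
  if h : σ.Nonempty then σ.sup' h (fun i => infDist x (V i)) else 0

lemma ff_def (V : Fin n → Set (Euc d)) {σ : Finset (Fin n)} (h : σ.Nonempty) (x : Euc d) :
    ff V σ x = σ.sup' h (fun i => infDist x (V i)) := by
  simp [ff, h]

lemma ff_le_iff (V : Fin n → Set (Euc d)) {σ : Finset (Fin n)} (h : σ.Nonempty) (x : Euc d)
    {c : ℝ} : ff V σ x ≤ c ↔ ∀ i ∈ σ, infDist x (V i) ≤ c := by
  rw [ff_def V h]; exact Finset.sup'_le_iff h _

lemma le_ff (V : Fin n → Set (Euc d)) {σ : Finset (Fin n)} {i : Fin n} (hi : i ∈ σ)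
    (x : Euc d) : infDist x (V i) ≤ ff V σ x := by
  rw [ff_def V ⟨i, hi⟩]; exact Finset.le_sup' (fun j => infDist x (V j)) hi

lemma ff_nonneg (V : Fin n → Set (Euc d)) (σ : Finset (Fin n)) (x : Euc d) :
    0 ≤ ff V σ x := by
  by_cases h : σ.Nonempty
  · obtain ⟨i, hi⟩ := h
    exact le_trans infDist_nonneg (le_ff V hi x)
  · simp [ff, h]

lemma ff_cont (V : Fin n → Set (Euc d)) (σ : Finset (Fin n)) : Continuous (ff V σ) := by
  by_cases h : σ.Nonempty
  · have h2 : Continuous (σ.sup' h (fun i (x : Euc d) => infDist x (V i))) :=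
      Continuous.finset_sup' h (fun i _ => continuous_infDist_pt (V i))
    have h3 : ff V σ = σ.sup' h (fun i (x : Euc d) => infDist x (V i)) := by
      funext x
      rw [ff_def V h, Finset.sup'_apply]
    rw [h3]; exact h2
  · have : ff V σ = fun _ => (0:ℝ) := by funext x; simp [ff, h]
    rw [this]; exact continuous_const

lemma ff_mono (V : Fin n → Set (Euc d)) {σ τ : Finset (Fin n)} (hσ : σ.Nonempty)
    (hστ : σ ⊆ τ) (x : Euc d) : ff V σ x ≤ ff V τ x := by
  rw [ff_le_iff V hσ]
  exact fun i hi => le_ff V (hστ hi) x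

lemma infDist_combo {W : Set (Euc d)} (hW : Convex ℝ W) (hne : W.Nonempty)
    {a b : ℝ} (ha : 0 ≤ a) (hb : 0 ≤ b) (hab : a + b = 1) (x y : Euc d) :
    infDist (a • x + b • y) W ≤ a * infDist x W + b * infDist y W := by
  refine le_of_forall_pos_le_add ?_
  intro ε hε
  obtain ⟨u, hu, hxu⟩ := (infDist_lt_iff hne).1
    (lt_add_of_pos_right (infDist x W) (half_pos hε))
  obtain ⟨v, hv, hyv⟩ := (infDist_lt_iff hne).1
    (lt_add_of_pos_right (infDist y W) (half_pos hε))
  have hmem : a • u + b • v ∈ W := hW hu hv ha hb hab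
  have hd : dist (a • x + b • y) (a • u + b • v) ≤ a * dist x u + b * dist y v := by
    rw [dist_eq_norm, dist_eq_norm, dist_eq_norm]
    have : a • x + b • y - (a • u + b • v) = a • (x - u) + b • (y - v) := by
      module
    rw [this]
    calc ‖a • (x - u) + b • (y - v)‖ ≤ ‖a • (x - u)‖ + ‖b • (y - v)‖ := norm_add_le _ _
      _ = a * ‖x - u‖ + b * ‖y - v‖ := by
          rw [norm_smul, norm_smul, Real.norm_of_nonneg ha, Real.norm_of_nonneg hb]
  calc infDist (a • x + b • y) W ≤ dist (a • x + b • y) (a • u + b • v) :=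
        infDist_le_dist_of_mem hmem
    _ ≤ a * dist x u + b * dist y v := hd
    _ ≤ a * (infDist x W + ε/2) + b * (infDist y W + ε/2) := by
        have := hxu.le; have := hyv.le
        gcongr
    _ = a * infDist x W + b * infDist y W + (a + b) * (ε / 2) := by ring
    _ ≤ a * infDist x W + b * infDist y W + ε := by rw [hab]; linarith

lemma ff_combo' {V : Fin n → Set (Euc d)} (hVcx : ∀ i, Convex ℝ (V i))
    (hVne : ∀ i, (V i).Nonempty) {σ : Finset (Fin n)} (hσ : σ.Nonempty)
    {a b : ℝ} (ha : 0 ≤ a) (hb : 0 ≤ b) (hab : a + b = 1) (x y : Euc d) :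
    ff V σ (a • x + b • y) ≤ a * ff V σ x + b * ff V σ y := by
  rw [ff_le_iff V hσ]
  intro i hi
  calc infDist (a • x + b • y) (V i) ≤ a * infDist x (V i) + b * infDist y (V i) :=
        infDist_combo (hVcx i) (hVne i) ha hb hab x y
    _ ≤ a * ff V σ x + b * ff V σ y := by
        have h1 := le_ff V hi x
        have h2 := le_ff V hi y
        gcongr


/-! ### argmin machinery -/

noncomputable def amin (V : Fin n → Set (Euc d)) (σ : Finset (Fin n)) : Euc d :=
  Classical.epsilon (fun x => ∀ y, ff V σ x ≤ ff V σ y)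

noncomputable def rho (V : Fin n → Set (Euc d)) (σ : Finset (Fin n)) : ℝ :=
  ff V σ (amin V σ)

def Mset (V : Fin n → Set (Euc d)) (σ : Finset (Fin n)) : Set (Euc d) :=
  {x | ff V σ x = rho V σ}

noncomputable def qpt (V : Fin n → Set (Euc d)) (σ : Finset (Fin n)) : Euc d :=
  Classical.epsilon (fun q => q ∈ Mset V σ ∧ ∀ y ∈ Mset V σ, ‖q‖ ≤ ‖y‖)

variable {V : Fin n → Set (Euc d)} {Mc : ℝ}

lemma le_infDist' {W : Set (Euc d)} (hne : W.Nonempty) {x : Euc d} {c : ℝ}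
    (h : ∀ y ∈ W, c ≤ dist x y) : c ≤ infDist x W := by
  by_contra hcon
  push_neg at hcon
  obtain ⟨y, hy, hlt⟩ := (infDist_lt_iff hne).1 hcon
  exact absurd (h y hy) (not_le.2 hlt)

lemma ff_coercive (hVne : ∀ i, (V i).Nonempty) (hVb : ∀ i, V i ⊆ closedBall 0 Mc)
    {σ : Finset (Fin n)} (hσ : σ.Nonempty) (x : Euc d) :
    ‖x‖ - Mc ≤ ff V σ x := by
  obtain ⟨i, hi⟩ := hσ
  refine le_trans ?_ (le_ff V hi x)
  refine le_infDist' (hVne i) ?_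
  intro y hy
  have h1 : ‖y‖ ≤ Mc := by simpa using hVb i hy
  have h2 : ‖x‖ ≤ ‖x - y‖ + ‖y‖ := by
    calc ‖x‖ = ‖x - y + y‖ := by rw [sub_add_cancel]
      _ ≤ ‖x - y‖ + ‖y‖ := norm_add_le _ _
  rw [dist_eq_norm]
  linarith

lemma Mc_nonneg (hVne : ∀ i, (V i).Nonempty) (hVb : ∀ i, V i ⊆ closedBall 0 Mc)
    (hn : 0 < n) : 0 ≤ Mc := by
  obtain ⟨y, hy⟩ := hVne ⟨0, hn⟩
  have : ‖y‖ ≤ Mc := by simpa using hVb ⟨0, hn⟩ hy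
  exact le_trans (norm_nonneg y) this

lemma exists_min (hVne : ∀ i, (V i).Nonempty) (hVb : ∀ i, V i ⊆ closedBall 0 Mc)
    {σ : Finset (Fin n)} (hσ : σ.Nonempty) :
    ∃ x, ∀ y, ff V σ x ≤ ff V σ y := by
  set RR : ℝ := Mc + ff V σ 0 + 1 with hRR
  have hMc : 0 ≤ Mc := by
    obtain ⟨i, hi⟩ := hσ
    obtain ⟨y, hy⟩ := hVne i
    have : ‖y‖ ≤ Mc := by simpa using hVb i hy
    exact le_trans (norm_nonneg y) this
  have h0ball : (0 : Euc d) ∈ closedBall (0 : Euc d) RR := by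
    simp only [mem_closedBall, dist_self]
    have := ff_nonneg V σ (0 : Euc d)
    linarith
  obtain ⟨x, hxball, hxmin⟩ := (isCompact_closedBall (0:Euc d) RR).exists_isMinOn
    ⟨0, h0ball⟩ (ff_cont V σ).continuousOn
  refine ⟨x, fun y => ?_⟩
  by_cases hy : y ∈ closedBall (0:Euc d) RR
  · exact hxmin hy
  · have hy' : RR < ‖y‖ := by
      simp only [mem_closedBall, dist_zero_right, not_le] at hy
      exact hy
    have h1 : ff V σ x ≤ ff V σ 0 := hxmin h0ball
    have h2 := ff_coercive hVne hVb hσ y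
    linarith

lemma rho_le (hVne : ∀ i, (V i).Nonempty) (hVb : ∀ i, V i ⊆ closedBall 0 Mc)
    {σ : Finset (Fin n)} (hσ : σ.Nonempty) (y : Euc d) :
    rho V σ ≤ ff V σ y :=
  Classical.epsilon_spec (exists_min hVne hVb hσ) y

lemma rho_nonneg (V : Fin n → Set (Euc d)) (σ : Finset (Fin n)) : 0 ≤ rho V σ :=
  ff_nonneg V σ _

lemma amin_mem (V : Fin n → Set (Euc d)) (σ : Finset (Fin n)) : amin V σ ∈ Mset V σ := rfl

lemma mem_Mset_iff {σ : Finset (Fin n)} (x : Euc d) :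
    x ∈ Mset V σ ↔ ff V σ x = rho V σ := Iff.rfl

lemma mem_Mset_of_le (hVne : ∀ i, (V i).Nonempty) (hVb : ∀ i, V i ⊆ closedBall 0 Mc)
    {σ : Finset (Fin n)} (hσ : σ.Nonempty) {x : Euc d} (h : ff V σ x ≤ rho V σ) :
    x ∈ Mset V σ :=
  le_antisymm h (rho_le hVne hVb hσ x)

lemma Mset_convex (hVne : ∀ i, (V i).Nonempty) (hVb : ∀ i, V i ⊆ closedBall 0 Mc)
    (hVcx : ∀ i, Convex ℝ (V i)) {σ : Finset (Fin n)} (hσ : σ.Nonempty) :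
    Convex ℝ (Mset V σ) := by
  intro x hx y hy a b ha hb hab
  have h1 : ff V σ (a • x + b • y) ≤ a * ff V σ x + b * ff V σ y :=
    ff_combo' hVcx hVne hσ ha hb hab x y
  rw [mem_Mset_iff] at hx hy
  rw [hx, hy] at h1
  refine mem_Mset_of_le hVne hVb hσ ?_
  have h3 : a * rho V σ + b * rho V σ = rho V σ := by
    rw [show a * rho V σ + b * rho V σ = (a+b) * rho V σ from by ring, hab, one_mul]
  linarith

lemma exists_qmin (hVne : ∀ i, (V i).Nonempty) (hVb : ∀ i, V i ⊆ closedBall 0 Mc)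
    {σ : Finset (Fin n)} (hσ : σ.Nonempty) :
    ∃ q, q ∈ Mset V σ ∧ ∀ y ∈ Mset V σ, ‖q‖ ≤ ‖y‖ := by
  have hne : (Mset V σ).Nonempty := ⟨amin V σ, amin_mem V σ⟩
  have hclosed : IsClosed (Mset V σ) :=
    isClosed_eq (ff_cont V σ) continuous_const
  have hbdd : Mset V σ ⊆ closedBall 0 (Mc + rho V σ) := by
    intro x hx
    rw [mem_Mset_iff] at hx
    have := ff_coercive hVne hVb hσ x
    rw [hx] at this
    simp only [mem_closedBall, dist_zero_right]
    linarith
  have hcp : IsCompact (Mset V σ) :=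
    (isCompact_closedBall _ _).of_isClosed_subset hclosed hbdd
  obtain ⟨q, hq, hqmin⟩ := hcp.exists_isMinOn hne continuous_norm.continuousOn
  exact ⟨q, hq, fun y hy => hqmin hy⟩

lemma qpt_spec (hVne : ∀ i, (V i).Nonempty) (hVb : ∀ i, V i ⊆ closedBall 0 Mc)
    {σ : Finset (Fin n)} (hσ : σ.Nonempty) :
    qpt V σ ∈ Mset V σ ∧ ∀ y ∈ Mset V σ, ‖qpt V σ‖ ≤ ‖y‖ :=
  Classical.epsilon_spec (exists_qmin hVne hVb hσ)

lemma qmin_unique (hVne : ∀ i, (V i).Nonempty) (hVb : ∀ i, V i ⊆ closedBall 0 Mc)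
    (hVcx : ∀ i, Convex ℝ (V i)) {σ : Finset (Fin n)} (hσ : σ.Nonempty)
    {q : Euc d} (hq : q ∈ Mset V σ) (hqmin : ∀ y ∈ Mset V σ, ‖q‖ ≤ ‖y‖) :
    q = qpt V σ := by
  obtain ⟨hq', hq'min⟩ := qpt_spec hVne hVb hσ
  set q' := qpt V σ
  by_contra hne'
  have hnorm : ‖q‖ = ‖q'‖ := le_antisymm (hqmin q' hq') (hq'min q hq)
  have hmid : (1/2 : ℝ) • q + (1/2 : ℝ) • q' ∈ Mset V σ :=
    Mset_convex hVne hVb hVcx hσ hq hq' (by norm_num) (by norm_num) (by norm_num)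
  have hpar := parallelogram_law_with_norm ℝ q q'
  have hqq' : 0 < ‖q - q'‖ := by
    rw [norm_pos_iff]
    exact sub_ne_zero_of_ne hne'
  have hlt : ‖q + q'‖ * ‖q + q'‖ < (2 * ‖q‖) * (2 * ‖q‖) := by
    rw [← hnorm] at hpar
    nlinarith [hpar, mul_pos hqq' hqq']
  have h2 : ‖(1/2 : ℝ) • q + (1/2 : ℝ) • q'‖ < ‖q‖ := by
    have hrw : (1/2 : ℝ) • q + (1/2 : ℝ) • q' = (1/2 : ℝ) • (q + q') := by module
    rw [hrw, norm_smul, Real.norm_of_nonneg (by norm_num : (0:ℝ) ≤ 1/2)]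
    nlinarith [hlt, norm_nonneg (q + q'), norm_nonneg q,
      sq_nonneg (‖q + q'‖ - 2 * ‖q‖)]
  have := hqmin _ hmid
  linarith


/-! ### Event structure lemmas -/

section Events

variable {V : Fin n → Set (Euc d)} {Mc : ℝ} {Δ : Set (Finset (Fin n))}

lemma empty_mem_Delta (hΔV : ∀ σ : Finset (Fin n), σ ∈ Δ ↔ ∃ x, ∀ i ∈ σ, x ∈ V i) :
    (∅ : Finset (Fin n)) ∈ Δ := by
  rw [hΔV]
  exact ⟨0, by simp⟩

lemma nonempty_of_not_mem (hΔV : ∀ σ : Finset (Fin n), σ ∈ Δ ↔ ∃ x, ∀ i ∈ σ, x ∈ V i)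
    {σ : Finset (Fin n)} (h : σ ∉ Δ) : σ.Nonempty := by
  rcases σ.eq_empty_or_nonempty with rfl | hne
  · exact absurd (empty_mem_Delta hΔV) h
  · exact hne

lemma Delta_dc (hΔV : ∀ σ : Finset (Fin n), σ ∈ Δ ↔ ∃ x, ∀ i ∈ σ, x ∈ V i) :
    IsSimplicialComplex Δ := by
  intro σ hσ τ hτσ
  rw [hΔV] at hσ ⊢
  obtain ⟨x, hx⟩ := hσ
  exact ⟨x, fun i hi => hx i (hτσ hi)⟩

lemma rho_eq_zero_of_mem (hVne : ∀ i, (V i).Nonempty) (hVb : ∀ i, V i ⊆ closedBall 0 Mc)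
    (hΔV : ∀ σ : Finset (Fin n), σ ∈ Δ ↔ ∃ x, ∀ i ∈ σ, x ∈ V i)
    {σ : Finset (Fin n)} (hσ : σ.Nonempty) (h : σ ∈ Δ) : rho V σ = 0 := by
  obtain ⟨x, hx⟩ := (hΔV σ).1 h
  have h1 : ff V σ x ≤ 0 := by
    rw [ff_le_iff V hσ]
    intro i hi
    rw [infDist_zero_of_mem (hx i hi)]
  exact le_antisymm (le_trans (rho_le hVne hVb hσ x) h1) (rho_nonneg V σ)

lemma rho_pos (hVne : ∀ i, (V i).Nonempty) (hVb : ∀ i, V i ⊆ closedBall 0 Mc)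
    (hVcp : ∀ i, IsCompact (V i))
    (hΔV : ∀ σ : Finset (Fin n), σ ∈ Δ ↔ ∃ x, ∀ i ∈ σ, x ∈ V i)
    {σ : Finset (Fin n)} (h : σ ∉ Δ) : 0 < rho V σ := by
  have hσ : σ.Nonempty := nonempty_of_not_mem hΔV h
  rcases lt_or_eq_of_le (rho_nonneg V σ) with hlt | heq
  · exact hlt
  · exfalso
    apply h
    rw [hΔV]
    refine ⟨amin V σ, fun i hi => ?_⟩
    have h1 : infDist (amin V σ) (V i) ≤ 0 := by
      rw [heq]
      exact le_ff V hi (amin V σ)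
    have h2 : infDist (amin V σ) (V i) = 0 := le_antisymm h1 infDist_nonneg
    exact ((hVcp i).isClosed.mem_iff_infDist_zero (hVne i)).2 h2

lemma not_mem_of_rho_pos (hVne : ∀ i, (V i).Nonempty) (hVb : ∀ i, V i ⊆ closedBall 0 Mc)
    (hΔV : ∀ σ : Finset (Fin n), σ ∈ Δ ↔ ∃ x, ∀ i ∈ σ, x ∈ V i)
    {σ : Finset (Fin n)} (hσ : σ.Nonempty) (h : 0 < rho V σ) : σ ∉ Δ := by
  intro hmem
  rw [rho_eq_zero_of_mem hVne hVb hΔV hσ hmem] at h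
  exact lt_irrefl 0 h

lemma rho_mono (hVne : ∀ i, (V i).Nonempty) (hVb : ∀ i, V i ⊆ closedBall 0 Mc)
    {σ τ : Finset (Fin n)} (hσ : σ.Nonempty) (hστ : σ ⊆ τ) : rho V σ ≤ rho V τ :=
  le_trans (rho_le hVne hVb hσ (amin V τ)) (ff_mono V hσ hστ (amin V τ))

lemma Mset_antitone (hVne : ∀ i, (V i).Nonempty) (hVb : ∀ i, V i ⊆ closedBall 0 Mc)
    {σ τ : Finset (Fin n)} (hσ : σ.Nonempty) (hστ : σ ⊆ τ) (heq : rho V σ = rho V τ) :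
    Mset V τ ⊆ Mset V σ := by
  intro x hx
  rw [mem_Mset_iff] at hx
  refine mem_Mset_of_le hVne hVb hσ ?_
  rw [heq, ← hx]
  exact ff_mono V hσ hστ x

lemma qpt_dichotomy (hVne : ∀ i, (V i).Nonempty) (hVb : ∀ i, V i ⊆ closedBall 0 Mc)
    (hVcx : ∀ i, Convex ℝ (V i))
    {σ τ : Finset (Fin n)} (hσ : σ.Nonempty) (hστ : σ ⊆ τ) (heq : rho V σ = rho V τ) :
    qpt V τ = qpt V σ ∨ ‖qpt V σ‖ < ‖qpt V τ‖ := by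
  have hτ : τ.Nonempty := hσ.mono hστ
  have hMsub := Mset_antitone hVne hVb hσ hστ heq
  have hτq := qpt_spec hVne hVb hτ
  have hσq := qpt_spec hVne hVb hσ
  have hmem : qpt V τ ∈ Mset V σ := hMsub hτq.1
  have hle : ‖qpt V σ‖ ≤ ‖qpt V τ‖ := hσq.2 _ hmem
  rcases lt_or_eq_of_le hle with hlt | heq2
  · exact Or.inr hlt
  · refine Or.inl (qmin_unique hVne hVb hVcx hσ hmem ?_)
    intro y hy
    rw [← heq2]
    exact hσq.2 y hy

lemma exists_g (hVne : ∀ i, (V i).Nonempty) (hVb : ∀ i, V i ⊆ closedBall 0 Mc)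
    (hVcp : ∀ i, IsCompact (V i)) (hUcx : Convex ℝ (⋃ i, V i))
    (hΔV : ∀ σ : Finset (Fin n), σ ∈ Δ ↔ ∃ x, ∀ i ∈ σ, x ∈ V i)
    {σ : Finset (Fin n)} (hσΔ : σ ∉ Δ) :
    ∃ g, infDist (qpt V σ) (V g) < rho V σ := by
  have hσ : σ.Nonempty := nonempty_of_not_mem hΔV hσΔ
  by_contra hcon
  push_neg at hcon
  set q := qpt V σ with hqdef
  have hq : q ∈ Mset V σ := (qpt_spec hVne hVb hσ).1
  have hffq : ff V σ q = rho V σ := hq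
  have hdeq : ∀ i ∈ σ, infDist q (V i) = rho V σ := by
    intro i hi
    refine le_antisymm ?_ (hcon i)
    rw [← hffq]
    exact le_ff V hi q
  have hP : ∀ i ∈ σ, ∃ p ∈ V i, dist q p = rho V σ := by
    intro i hi
    obtain ⟨p, hp, hdist⟩ := (hVcp i).exists_infDist_eq_dist (hVne i) q
    exact ⟨p, hp, by rw [← hdist, hdeq i hi]⟩
  obtain ⟨i0, hi0⟩ := hσ
  obtain ⟨p0, hp0, hd0⟩ := hP i0 hi0
  have hall : ∀ i ∈ σ, ∀ p ∈ V i, dist q p = rho V σ → p = p0 := by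
    intro i hi p hp hd
    have hmidU : (1/2 : ℝ) • p + (1/2 : ℝ) • p0 ∈ ⋃ j, V j :=
      hUcx (mem_iUnion.2 ⟨i, hp⟩) (mem_iUnion.2 ⟨i0, hp0⟩)
        (by norm_num) (by norm_num) (by norm_num)
    obtain ⟨g, hg⟩ := mem_iUnion.1 hmidU
    have hmid_far : rho V σ ≤ dist q ((1/2:ℝ) • p + (1/2:ℝ) • p0) :=
      le_trans (hcon g) (infDist_le_dist_of_mem hg)
    have hpar := parallelogram_law_with_norm ℝ (q - p) (q - p0)
    have h1 : ‖q - p‖ = rho V σ := by rw [← dist_eq_norm]; exact hd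
    have h2 : ‖q - p0‖ = rho V σ := by rw [← dist_eq_norm]; exact hd0
    have h3 : q - p + (q - p0) = (2:ℝ) • (q - ((1/2:ℝ) • p + (1/2:ℝ) • p0)) := by
      module
    have h4 : ‖q - p + (q - p0)‖ = 2 * dist q ((1/2:ℝ) • p + (1/2:ℝ) • p0) := by
      rw [h3, norm_smul, dist_eq_norm]
      norm_num
    have h5 : ‖q - p - (q - p0)‖ = ‖p0 - p‖ := by
      congr 1
      module
    have hA : rho V σ * rho V σ ≤
        dist q ((1/2:ℝ) • p + (1/2:ℝ) • p0) * dist q ((1/2:ℝ) • p + (1/2:ℝ) • p0) :=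
      mul_self_le_mul_self (rho_nonneg V σ) hmid_far
    rw [h4, h5, h1, h2] at hpar
    have hz : ‖p0 - p‖ * ‖p0 - p‖ ≤ 0 := by nlinarith [hpar, hA]
    have hz2 : ‖p0 - p‖ = 0 := by
      nlinarith [norm_nonneg (p0 - p), hz]
    have : p0 - p = 0 := norm_eq_zero.1 hz2
    have : p0 = p := by
      have := sub_eq_zero.1 this
      exact this
    exact this.symm
  apply hσΔ
  rw [hΔV]
  refine ⟨p0, fun i hi => ?_⟩
  obtain ⟨p, hp, hd⟩ := hP i hi
  rw [← hall i hi p hp hd]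
  exact hp

lemma insert_event (hVne : ∀ i, (V i).Nonempty) (hVb : ∀ i, V i ⊆ closedBall 0 Mc)
    (hVcx : ∀ i, Convex ℝ (V i))
    (hΔV : ∀ σ : Finset (Fin n), σ ∈ Δ ↔ ∃ x, ∀ i ∈ σ, x ∈ V i)
    {σ : Finset (Fin n)} (hσΔ : σ ∉ Δ) {g : Fin n}
    (hg : infDist (qpt V σ) (V g) < rho V σ) :
    rho V (insert g σ) = rho V σ ∧ qpt V (insert g σ) = qpt V σ := by
  have hσ : σ.Nonempty := nonempty_of_not_mem hΔV hσΔ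
  set τ : Finset (Fin n) := insert g σ with hτdef
  have hτ : τ.Nonempty := Finset.insert_nonempty g σ
  set q := qpt V σ with hqdef
  have hq : q ∈ Mset V σ := (qpt_spec hVne hVb hσ).1
  have hffq : ff V σ q = rho V σ := hq
  have hffτq : ff V τ q = rho V σ := by
    refine le_antisymm ?_ ?_
    · rw [ff_le_iff V hτ]
      intro i hi
      rcases Finset.mem_insert.1 hi with rfl | hi'
      · exact hg.le
      · rw [← hffq]; exact le_ff V hi' q
    · rw [← hffq]
      exact ff_mono V hσ (Finset.subset_insert g σ) q
  have hrho : rho V τ = rho V σ := by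
    refine le_antisymm ?_ (rho_mono hVne hVb hσ (Finset.subset_insert g σ))
    rw [← hffτq]
    exact rho_le hVne hVb hτ q
  refine ⟨hrho, ?_⟩
  rcases qpt_dichotomy hVne hVb hVcx hσ (Finset.subset_insert g σ) hrho.symm with h | h
  · exact h
  · exfalso
    have hqτ : q ∈ Mset V τ := by
      rw [mem_Mset_iff, hffτq, hrho]
    have := (qpt_spec hVne hVb hτ).2 q hqτ
    linarith

lemma erase_event (hVne : ∀ i, (V i).Nonempty) (hVb : ∀ i, V i ⊆ closedBall 0 Mc)
    (hVcx : ∀ i, Convex ℝ (V i)) (hVcp : ∀ i, IsCompact (V i))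
    (hΔV : ∀ σ : Finset (Fin n), σ ∈ Δ ↔ ∃ x, ∀ i ∈ σ, x ∈ V i)
    {σ : Finset (Fin n)} (hσΔ : σ ∉ Δ) {g : Fin n} (hgσ : g ∈ σ)
    (hg : infDist (qpt V σ) (V g) < rho V σ) :
    (σ.erase g).Nonempty ∧ rho V (σ.erase g) = rho V σ ∧ qpt V (σ.erase g) = qpt V σ := by
  have hσ : σ.Nonempty := nonempty_of_not_mem hΔV hσΔ
  set q := qpt V σ with hqdef
  have hq : q ∈ Mset V σ := (qpt_spec hVne hVb hσ).1
  have hffq : ff V σ q = rho V σ := hq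
  -- erase is nonempty
  have hern : (σ.erase g).Nonempty := by
    by_contra hcon
    rw [Finset.not_nonempty_iff_eq_empty] at hcon
    have hσg : σ = {g} := by
      apply Finset.eq_singleton_iff_unique_mem.2
      refine ⟨hgσ, fun x hx => ?_⟩
      by_contra hxg
      exact absurd (Finset.mem_erase.2 ⟨hxg, hx⟩) (by rw [hcon]; exact Finset.notMem_empty x)
    have : ff V σ q = infDist q (V g) := by
      rw [hσg, ff_def V (Finset.singleton_nonempty g)]
      simp
    rw [hffq] at this
    rw [this] at hg
    exact lt_irrefl _ hg
  refine ⟨hern, ?_⟩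
  -- rho equality
  have hrhole : rho V (σ.erase g) ≤ rho V σ := rho_mono hVne hVb hern (Finset.erase_subset g σ)
  have hrho : rho V (σ.erase g) = rho V σ := by
    rcases lt_or_eq_of_le hrhole with hlt | heq
    · exfalso
      set y := amin V (σ.erase g) with hydef
      have hy : ff V (σ.erase g) y = rho V (σ.erase g) := rfl
      set L : ℝ := ‖y - q‖ with hLdef
      set D : ℝ := rho V σ - infDist q (V g) with hDdef
      have hD : 0 < D := by rw [hDdef]; linarith
      set t : ℝ := min (1/2) (D / (2 * (L + 1))) with htdef
      have hL0 : 0 ≤ L := norm_nonneg _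
      have ht0 : 0 < t := by
        apply lt_min (by norm_num)
        positivity
      have ht1 : t ≤ 1/2 := min_le_left _ _
      have htL : t * L < D := by
        have h1 : t ≤ D / (2 * (L + 1)) := min_le_right _ _
        have h2 : t * L ≤ D / (2 * (L + 1)) * L := by
          apply mul_le_mul_of_nonneg_right h1 hL0
        have h3 : D / (2 * (L + 1)) * L < D := by
          rw [div_mul_eq_mul_div, div_lt_iff₀ (by positivity)]
          nlinarith [hD, hL0]
        linarith
      set z : Euc d := (1 - t) • q + t • y with hzdef
      have hzq : z - q = t • (y - q) := by rw [hzdef]; module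
      have hdzq : dist z q = t * L := by
        rw [dist_eq_norm, hzq, norm_smul, Real.norm_of_nonneg ht0.le]
      have hffz : ff V σ z < rho V σ := by
        have hub : ∀ i ∈ σ, infDist z (V i) ≤
            max (infDist q (V g) + t * L) ((1 - t) * rho V σ + t * rho V (σ.erase g)) := by
          intro i hi
          by_cases hig : i = g
          · subst hig
            refine le_trans ?_ (le_max_left _ _)
            calc infDist z (V i) ≤ infDist q (V i) + dist z q := infDist_le_infDist_add_dist
              _ = infDist q (V i) + t * L := by rw [hdzq]
          · have hier : i ∈ σ.erase g := Finset.mem_erase.2 ⟨hig, hi⟩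
            refine le_trans ?_ (le_max_right _ _)
            calc infDist z (V i) ≤ (1 - t) * infDist q (V i) + t * infDist y (V i) :=
                  infDist_combo (hVcx i) (hVne i) (by linarith) ht0.le (by ring) q y
              _ ≤ (1 - t) * rho V σ + t * rho V (σ.erase g) := by
                  have e1 : infDist q (V i) ≤ rho V σ := by
                    rw [← hffq]; exact le_ff V hi q
                  have e2 : infDist y (V i) ≤ rho V (σ.erase g) := by
                    rw [← hy]; exact le_ff V hier y
                  have ht1' : (0:ℝ) ≤ 1 - t := by linarith
                  gcongr
        have hmax : max (infDist q (V g) + t * L) ((1 - t) * rho V σ + t * rho V (σ.erase g))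
            < rho V σ := by
          apply max_lt
          · rw [hDdef] at htL; linarith
          · nlinarith [ht0, hlt]
        calc ff V σ z ≤ _ := (ff_le_iff V hσ z).2 hub
          _ < rho V σ := hmax
      exact absurd (rho_le hVne hVb hσ z) (not_le.2 hffz)
    · exact heq
  refine ⟨hrho, ?_⟩
  -- qpt equality
  have hMsub : Mset V σ ⊆ Mset V (σ.erase g) := by
    intro x hx
    rw [mem_Mset_iff] at hx
    refine mem_Mset_of_le hVne hVb hern ?_
    rw [hrho, ← hx]
    exact ff_mono V hern (Finset.erase_subset g σ) x
  set q' := qpt V (σ.erase g) with hq'def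
  have hq'M : q' ∈ Mset V (σ.erase g) := (qpt_spec hVne hVb hern).1
  have hqM' : q ∈ Mset V (σ.erase g) := hMsub hq
  have hle : ‖q'‖ ≤ ‖q‖ := (qpt_spec hVne hVb hern).2 q hqM'
  rcases lt_or_eq_of_le hle with hlt | heq2
  · exfalso
    -- build z ∈ Mset V σ with smaller norm
    set L : ℝ := ‖q' - q‖ with hLdef
    set D : ℝ := rho V σ - infDist q (V g) with hDdef
    have hD : 0 < D := by rw [hDdef]; linarith
    set t : ℝ := min (1/2) (D / (2 * (L + 1))) with htdef
    have hL0 : 0 ≤ L := norm_nonneg _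
    have ht0 : 0 < t := by
      apply lt_min (by norm_num)
      positivity
    have ht1 : t ≤ 1/2 := min_le_left _ _
    have htL : t * L < D := by
      have h1 : t ≤ D / (2 * (L + 1)) := min_le_right _ _
      have h2 : t * L ≤ D / (2 * (L + 1)) * L :=
        mul_le_mul_of_nonneg_right h1 hL0
      have h3 : D / (2 * (L + 1)) * L < D := by
        rw [div_mul_eq_mul_div, div_lt_iff₀ (by positivity)]
        nlinarith [hD, hL0]
      linarith
    set z : Euc d := (1 - t) • q + t • q' with hzdef
    have hzq : z - q = t • (q' - q) := by rw [hzdef]; module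
    have hdzq : dist z q = t * L := by
      rw [dist_eq_norm, hzq, norm_smul, Real.norm_of_nonneg ht0.le]
    have hffq' : ff V (σ.erase g) q' = rho V σ := by
      rw [← hrho]; exact hq'M
    have hffz : ff V σ z ≤ rho V σ := by
      rw [ff_le_iff V hσ]
      intro i hi
      by_cases hig : i = g
      · subst hig
        calc infDist z (V i) ≤ infDist q (V i) + dist z q := infDist_le_infDist_add_dist
          _ = infDist q (V i) + t * L := by rw [hdzq]
          _ ≤ rho V σ := by rw [hDdef] at htL; linarith
      · have hier : i ∈ σ.erase g := Finset.mem_erase.2 ⟨hig, hi⟩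
        calc infDist z (V i) ≤ (1 - t) * infDist q (V i) + t * infDist q' (V i) :=
              infDist_combo (hVcx i) (hVne i) (by linarith) ht0.le (by ring) q q'
          _ ≤ (1 - t) * rho V σ + t * rho V σ := by
              have e1 : infDist q (V i) ≤ rho V σ := by
                rw [← hffq]; exact le_ff V hi q
              have e2 : infDist q' (V i) ≤ rho V σ := by
                rw [← hffq']; exact le_ff V hier q'
              have ht1' : (0:ℝ) ≤ 1 - t := by linarith
              gcongr
          _ = rho V σ := by ring
    have hzM : z ∈ Mset V σ := mem_Mset_of_le hVne hVb hσ hffz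
    have hzn : ‖z‖ < ‖q‖ := by
      calc ‖z‖ ≤ ‖(1-t) • q‖ + ‖t • q'‖ := norm_add_le _ _
        _ = (1-t) * ‖q‖ + t * ‖q'‖ := by
            rw [norm_smul, norm_smul, Real.norm_of_nonneg (by linarith : (0:ℝ) ≤ 1 - t),
              Real.norm_of_nonneg ht0.le]
        _ < (1-t) * ‖q‖ + t * ‖q‖ := by
            have : t * ‖q'‖ < t * ‖q‖ := by
              exact mul_lt_mul_of_pos_left hlt ht0
            linarith
        _ = ‖q‖ := by ring
    have := (qpt_spec hVne hVb hσ).2 z hzM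
    linarith
  · -- equal norms: q is the min-norm point of Mset (erase), hence q = q'
    refine (qmin_unique hVne hVb hVcx hern hqM' ?_).symm
    intro y hy
    rw [← heq2]
    exact (qpt_spec hVne hVb hern).2 y hy

end Events

/-! ### The matching and the collapsing chain -/

noncomputable def gsel (V : Fin n → Set (Euc d)) (i₀ : Fin n) (r : ℝ) (q : Euc d) : Fin n :=
  if h : ∃ g, infDist q (V g) < r then h.choose else i₀

noncomputable def gg (V : Fin n → Set (Euc d)) (i₀ : Fin n) (σ : Finset (Fin n)) : Fin n :=
  gsel V i₀ (rho V σ) (qpt V σ)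

noncomputable def phi (V : Fin n → Set (Euc d)) (i₀ : Fin n) (σ : Finset (Fin n)) :
    Finset (Fin n) :=
  if gg V i₀ σ ∈ σ then σ.erase (gg V i₀ σ) else insert (gg V i₀ σ) σ

section Chain

variable {V : Fin n → Set (Euc d)} {Mc : ℝ} {Δ : Set (Finset (Fin n))} {i₀ : Fin n}

lemma gg_spec (hVne : ∀ i, (V i).Nonempty) (hVb : ∀ i, V i ⊆ closedBall 0 Mc)
    (hVcp : ∀ i, IsCompact (V i)) (hUcx : Convex ℝ (⋃ i, V i))
    (hΔV : ∀ σ : Finset (Fin n), σ ∈ Δ ↔ ∃ x, ∀ i ∈ σ, x ∈ V i)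
    {σ : Finset (Fin n)} (hσΔ : σ ∉ Δ) :
    infDist (qpt V σ) (V (gg V i₀ σ)) < rho V σ := by
  have h := exists_g hVne hVb hVcp hUcx hΔV hσΔ
  rw [gg, gsel, dif_pos h]
  exact h.choose_spec

lemma gg_congr {σ τ : Finset (Fin n)} (h1 : rho V σ = rho V τ) (h2 : qpt V σ = qpt V τ) :
    gg V i₀ σ = gg V i₀ τ := by
  rw [gg, gg, h1, h2]

lemma phi_event (hVne : ∀ i, (V i).Nonempty) (hVb : ∀ i, V i ⊆ closedBall 0 Mc)
    (hVcx : ∀ i, Convex ℝ (V i)) (hVcp : ∀ i, IsCompact (V i))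
    (hUcx : Convex ℝ (⋃ i, V i))
    (hΔV : ∀ σ : Finset (Fin n), σ ∈ Δ ↔ ∃ x, ∀ i ∈ σ, x ∈ V i)
    {σ : Finset (Fin n)} (hσΔ : σ ∉ Δ) :
    phi V i₀ σ ∉ Δ ∧ rho V (phi V i₀ σ) = rho V σ ∧ qpt V (phi V i₀ σ) = qpt V σ := by
  have hg := gg_spec (i₀ := i₀) hVne hVb hVcp hUcx hΔV hσΔ
  by_cases hmem : gg V i₀ σ ∈ σ
  · have hϕ : phi V i₀ σ = σ.erase (gg V i₀ σ) := by rw [phi, if_pos hmem]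
    obtain ⟨hne, hrho, hq⟩ := erase_event hVne hVb hVcx hVcp hΔV hσΔ hmem hg
    rw [hϕ]
    have hpos : 0 < rho V (σ.erase (gg V i₀ σ)) := by
      rw [hrho]; exact rho_pos hVne hVb hVcp hΔV hσΔ
    exact ⟨not_mem_of_rho_pos hVne hVb hΔV hne hpos, hrho, hq⟩
  · have hϕ : phi V i₀ σ = insert (gg V i₀ σ) σ := by rw [phi, if_neg hmem]
    obtain ⟨hrho, hq⟩ := insert_event hVne hVb hVcx hΔV hσΔ hg
    rw [hϕ]
    have hpos : 0 < rho V (insert (gg V i₀ σ) σ) := by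
      rw [hrho]; exact rho_pos hVne hVb hVcp hΔV hσΔ
    exact ⟨not_mem_of_rho_pos hVne hVb hΔV (Finset.insert_nonempty _ _) hpos, hrho, hq⟩

lemma phi_invol (hVne : ∀ i, (V i).Nonempty) (hVb : ∀ i, V i ⊆ closedBall 0 Mc)
    (hVcx : ∀ i, Convex ℝ (V i)) (hVcp : ∀ i, IsCompact (V i))
    (hUcx : Convex ℝ (⋃ i, V i))
    (hΔV : ∀ σ : Finset (Fin n), σ ∈ Δ ↔ ∃ x, ∀ i ∈ σ, x ∈ V i)
    {σ : Finset (Fin n)} (hσΔ : σ ∉ Δ) :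
    phi V i₀ (phi V i₀ σ) = σ := by
  obtain ⟨hϕΔ, hrho, hq⟩ := phi_event (i₀ := i₀) hVne hVb hVcx hVcp hUcx hΔV hσΔ
  have hgg : gg V i₀ (phi V i₀ σ) = gg V i₀ σ := gg_congr hrho hq
  by_cases hmem : gg V i₀ σ ∈ σ
  · have hϕ : phi V i₀ σ = σ.erase (gg V i₀ σ) := by rw [phi, if_pos hmem]
    rw [phi, hgg, hϕ, if_neg (Finset.notMem_erase _ _), Finset.insert_erase hmem]
  · have hϕ : phi V i₀ σ = insert (gg V i₀ σ) σ := by rw [phi, if_neg hmem]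
    rw [phi, hgg, hϕ, if_pos (Finset.mem_insert_self _ _), Finset.erase_insert hmem]

lemma inner_collapse (hVne : ∀ i, (V i).Nonempty) (hVb : ∀ i, V i ⊆ closedBall 0 Mc)
    (hVcx : ∀ i, Convex ℝ (V i)) (hVcp : ∀ i, IsCompact (V i))
    (hUcx : Convex ℝ (⋃ i, V i))
    (hΔV : ∀ σ : Finset (Fin n), σ ∈ Δ ↔ ∃ x, ∀ i ∈ σ, x ∈ V i)
    (r m : ℝ) (low : Set (Finset (Fin n)))
    (hlow : ∀ τ ∈ low, τ ∉ Δ ∧ (rho V τ < r ∨ (rho V τ = r ∧ ‖qpt V τ‖ < m))) :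
    ∀ k : ℕ, ∀ rem : Set (Finset (Fin n)),
      (∀ τ ∈ rem, τ ∉ Δ ∧ rho V τ = r ∧ ‖qpt V τ‖ = m) →
      (∀ τ ∈ rem, phi V i₀ τ ∈ rem) →
      rem.ncard = k →
      CollapsesTo (Δ ∪ low ∪ rem) (Δ ∪ low) := by
  intro k
  induction k using Nat.strong_induction_on with
  | _ k IH =>
    intro rem hrem hphi hcard
    rcases rem.eq_empty_or_nonempty with rfl | ⟨τ1, hτ1⟩
    · rw [Set.union_empty]
      exact Relation.ReflTransGen.refl
    · -- the set of lower halves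
      set LH : Set (Finset (Fin n)) := {τ | τ ∈ rem ∧ gg V i₀ τ ∉ τ} with hLHdef
      have hLHne : LH.Nonempty := by
        by_cases hmem : gg V i₀ τ1 ∈ τ1
        · refine ⟨phi V i₀ τ1, hphi τ1 hτ1, ?_⟩
          obtain ⟨hϕΔ, hrho, hq⟩ :=
            phi_event (i₀ := i₀) hVne hVb hVcx hVcp hUcx hΔV (hrem τ1 hτ1).1
          rw [gg_congr hrho hq]
          have hϕ : phi V i₀ τ1 = τ1.erase (gg V i₀ τ1) := by rw [phi, if_pos hmem]
          rw [hϕ]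
          exact Finset.notMem_erase _ _
        · exact ⟨τ1, hτ1, hmem⟩
      obtain ⟨σ₀, hσ₀LH, hmax⟩ :=
        (Set.toFinite LH).exists_maximal_wrt Finset.card LH hLHne
      obtain ⟨hσ₀rem, hg₀σ₀⟩ := hσ₀LH
      obtain ⟨hσ₀Δ, hσ₀r, hσ₀m⟩ := hrem σ₀ hσ₀rem
      have hσ₀ne : σ₀.Nonempty := nonempty_of_not_mem hΔV hσ₀Δ
      set g₀ : Fin n := gg V i₀ σ₀ with hg₀def
      set τ₀ : Finset (Fin n) := insert g₀ σ₀ with hτ₀def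
      have hϕσ₀ : phi V i₀ σ₀ = τ₀ := by rw [phi, if_neg hg₀σ₀]
      have hτ₀rem : τ₀ ∈ rem := hϕσ₀ ▸ hphi σ₀ hσ₀rem
      have hτ₀ne : τ₀ ≠ σ₀ := by
        intro h
        exact hg₀σ₀ (h ▸ Finset.mem_insert_self g₀ σ₀)
      have hστ₀ : σ₀ ⊆ τ₀ := Finset.subset_insert g₀ σ₀
      -- no coface in Δ ∪ low
      have hnoΔlow : ∀ τ ∈ Δ ∪ low, ¬ σ₀ ⊆ τ := by
        rintro τ (hτ | hτ) hsub
        · exact hσ₀Δ (Delta_dc hΔV τ hτ σ₀ hsub)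
        · obtain ⟨hτΔ, hkey⟩ := hlow τ hτ
          have hrhoge : r ≤ rho V τ := hσ₀r ▸ rho_mono hVne hVb hσ₀ne hsub
          rcases hkey with h1 | ⟨h1, h2⟩
          · exact absurd h1 (not_lt.2 hrhoge)
          · have hre : rho V σ₀ = rho V τ := by rw [hσ₀r, h1]
            rcases qpt_dichotomy hVne hVb hVcx hσ₀ne hsub hre with hq | hq
            · rw [hq, hσ₀m] at h2
              exact lt_irrefl m h2
            · rw [hσ₀m] at hq
              exact absurd h2 (not_lt.2 hq.le)
      -- cofaces within rem
      have hremcof : ∀ τ ∈ rem, σ₀ ⊆ τ → τ = σ₀ ∨ τ = τ₀ := by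
        intro τ hτ hsub
        obtain ⟨hτΔ, hτr, hτm⟩ := hrem τ hτ
        have hre : rho V σ₀ = rho V τ := by rw [hσ₀r, hτr]
        have hqeq : qpt V τ = qpt V σ₀ := by
          rcases qpt_dichotomy hVne hVb hVcx hσ₀ne hsub hre with hq | hq
          · exact hq
          · exfalso
            rw [hσ₀m, hτm] at hq
            exact lt_irrefl m hq
        have hgg : gg V i₀ τ = g₀ := gg_congr (hre.symm) hqeq
        by_cases hgτ : g₀ ∈ τ
        · right
          have hϕτ : phi V i₀ τ = τ.erase g₀ := by rw [phi, hgg, if_pos hgτ]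
          have her : τ.erase g₀ ∈ rem := hϕτ ▸ hphi τ hτ
          have herLH : τ.erase g₀ ∈ LH := by
            refine ⟨her, ?_⟩
            obtain ⟨hϕΔ, hrho2, hq2⟩ :=
              phi_event (i₀ := i₀) hVne hVb hVcx hVcp hUcx hΔV hτΔ
            rw [hϕτ] at hrho2 hq2
            have : gg V i₀ (τ.erase g₀) = g₀ := by rw [gg_congr hrho2 hq2, hgg]
            rw [this]
            exact Finset.notMem_erase _ _
          have hsub' : σ₀ ⊆ τ.erase g₀ := Finset.subset_erase.2 ⟨hsub, hg₀σ₀⟩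
          have h1 : σ₀.card ≤ (τ.erase g₀).card := Finset.card_le_card hsub'
          have h2 : σ₀.card = (τ.erase g₀).card := hmax _ herLH h1
          have h3 : σ₀ = τ.erase g₀ :=
            Finset.eq_of_subset_of_card_le hsub' (le_of_eq h2.symm)
          rw [hτ₀def, h3, Finset.insert_erase hgτ]
        · left
          have hτLH : τ ∈ LH := ⟨hτ, by rw [hgg]; exact hgτ⟩
          have h1 : σ₀.card ≤ τ.card := Finset.card_le_card hsub
          have h2 : σ₀.card = τ.card := hmax τ hτLH h1
          exact (Finset.eq_of_subset_of_card_le hsub (le_of_eq h2.symm)).symm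
      -- the elementary collapse at σ₀
      set X : Set (Finset (Fin n)) := Δ ∪ low ∪ rem with hXdef
      have hσ₀X : σ₀ ∈ X := Or.inr hσ₀rem
      have hτ₀X : τ₀ ∈ X := Or.inr hτ₀rem
      have hcofX : ∀ τ ∈ X, σ₀ ⊆ τ → τ = σ₀ ∨ τ = τ₀ := by
        rintro τ (hτ | hτ) hsub
        · exact absurd hsub (hnoΔlow τ hτ)
        · exact hremcof τ hτ hsub
      have hfacτ₀ : IsFacet X τ₀ := by
        refine ⟨hτ₀X, fun ζ hζ hsub => ?_⟩
        rcases hcofX ζ hζ (hστ₀.trans hsub) with h | h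
        · exfalso
          rw [h] at hsub
          exact hg₀σ₀ (hsub (Finset.mem_insert_self g₀ σ₀))
        · exact h
      have hfree : IsFreeFace X σ₀ := by
        refine ⟨hσ₀X, ?_, ⟨τ₀, ⟨hfacτ₀, hστ₀⟩, ?_⟩⟩
        · rintro ⟨-, hfac⟩
          exact hτ₀ne (hfac τ₀ hτ₀X hστ₀)
        · rintro ζ ⟨hζfac, hσζ⟩
          rcases hcofX ζ hζfac.1 hσζ with h | h
          · exfalso
            subst h
            exact hτ₀ne (hζfac.2 τ₀ hτ₀X hστ₀)
          · exact h
      set rem' : Set (Finset (Fin n)) := rem \ {σ₀, τ₀} with hrem'def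
      have hstep : ElemCollapse X (Δ ∪ low ∪ rem') := by
        refine ⟨σ₀, hfree, ?_⟩
        ext ζ
        simp only [Set.mem_sep_iff]
        constructor
        · rintro (hζ | ⟨hζ, hζpair⟩)
          · exact ⟨Or.inl hζ, hnoΔlow ζ hζ⟩
          · refine ⟨Or.inr hζ, fun hsub => ?_⟩
            rcases hremcof ζ hζ hsub with rfl | rfl
            · exact hζpair (Or.inl rfl)
            · exact hζpair (Or.inr rfl)
        · rintro ⟨hζX, hnsub⟩
          rcases hζX with hζ | hζ
          · exact Or.inl hζ
          · refine Or.inr ⟨hζ, ?_⟩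
            intro hmem
            rcases hmem with rfl | h
            · exact hnsub subset_rfl
            · rw [Set.mem_singleton_iff] at h
              subst h
              exact hnsub hστ₀
      -- recursion
      have hrem'1 : ∀ τ ∈ rem', τ ∉ Δ ∧ rho V τ = r ∧ ‖qpt V τ‖ = m :=
        fun τ hτ => hrem τ hτ.1
      have hrem'2 : ∀ τ ∈ rem', phi V i₀ τ ∈ rem' := by
        rintro τ ⟨hτ, hτpair⟩
        refine ⟨hphi τ hτ, ?_⟩
        intro hmem
        have hinv := phi_invol (i₀ := i₀) hVne hVb hVcx hVcp hUcx hΔV (hrem τ hτ).1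
        rcases hmem with heq | heq
        · apply hτpair
          right
          rw [Set.mem_singleton_iff]
          rw [← hinv, heq, hϕσ₀]
        · rw [Set.mem_singleton_iff] at heq
          apply hτpair
          left
          rw [← hinv, heq, ← hϕσ₀,
            phi_invol (i₀ := i₀) hVne hVb hVcx hVcp hUcx hΔV hσ₀Δ]
      have hlt : rem'.ncard < k := by
        rw [← hcard]
        apply Set.ncard_lt_ncard ?_ (Set.toFinite rem)
        constructor
        · exact Set.diff_subset
        · intro hsub
          have := hsub hσ₀rem
          exact this.2 (Or.inl rfl)
      have hrec := IH rem'.ncard hlt rem' hrem'1 hrem'2 rfl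
      exact Relation.ReflTransGen.head hstep hrec

lemma outer_collapse (i₀ : Fin n) (hVne : ∀ i, (V i).Nonempty) (hVb : ∀ i, V i ⊆ closedBall 0 Mc)
    (hVcx : ∀ i, Convex ℝ (V i)) (hVcp : ∀ i, IsCompact (V i))
    (hUcx : Convex ℝ (⋃ i, V i))
    (hΔV : ∀ σ : Finset (Fin n), σ ∈ Δ ↔ ∃ x, ∀ i ∈ σ, x ∈ V i) :
    ∀ k : ℕ, ∀ S : Set (Finset (Fin n)),
      (∀ τ ∈ S, τ ∉ Δ) →
      (∀ τ ∈ S, ∀ τ', τ' ∉ Δ → rho V τ' = rho V τ → ‖qpt V τ'‖ = ‖qpt V τ‖ → τ' ∈ S) →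
      (∀ τ ∈ S, ∀ τ', τ' ∉ Δ →
        (rho V τ' < rho V τ ∨ (rho V τ' = rho V τ ∧ ‖qpt V τ'‖ < ‖qpt V τ‖)) → τ' ∈ S) →
      S.ncard = k → CollapsesTo (Δ ∪ S) Δ := by
  intro k
  induction k using Nat.strong_induction_on with
  | _ k IH =>
    intro S hS0 hS1 hS2 hcard
    rcases S.eq_empty_or_nonempty with rfl | hSne
    · rw [Set.union_empty]
      exact Relation.ReflTransGen.refl
    · obtain ⟨σm, hσm, hmax⟩ :=
        (Set.toFinite S).exists_maximal_wrt
          (fun τ => toLex (rho V τ, ‖qpt V τ‖)) S hSne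
      set r : ℝ := rho V σm with hrdef
      set m : ℝ := ‖qpt V σm‖ with hmdef
      set C : Set (Finset (Fin n)) := {τ | τ ∉ Δ ∧ rho V τ = r ∧ ‖qpt V τ‖ = m} with hCdef
      have hCsub : C ⊆ S := by
        rintro τ ⟨hτΔ, hτr, hτm⟩
        exact hS1 σm hσm τ hτΔ hτr hτm
      set low : Set (Finset (Fin n)) := S \ C with hlowdef
      have hSlowC : S = low ∪ C := by
        rw [hlowdef, Set.diff_union_of_subset hCsub]
      have hlowspec : ∀ τ ∈ low, τ ∉ Δ ∧
          (rho V τ < r ∨ (rho V τ = r ∧ ‖qpt V τ‖ < m)) := by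
        rintro τ ⟨hτS, hτC⟩
        refine ⟨hS0 τ hτS, ?_⟩
        have hle : toLex (rho V τ, ‖qpt V τ‖) ≤ toLex (r, m) := by
          by_contra hcon
          push_neg at hcon
          have h1 := hmax τ hτS hcon.le
          rw [h1] at hcon
          exact lt_irrefl _ hcon
        rcases lt_or_eq_of_le hle with hlt | heq
        · rw [Prod.Lex.lt_iff] at hlt
          exact hlt
        · exfalso
          apply hτC
          have h2 : (rho V τ, ‖qpt V τ‖) = (r, m) := toLex.injective heq
          have h3 : rho V τ = r := congrArg Prod.fst h2
          have h4 : ‖qpt V τ‖ = m := congrArg Prod.snd h2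
          exact ⟨hS0 τ hτS, h3, h4⟩
      have hCphi : ∀ τ ∈ C, phi V i₀ τ ∈ C := by
        rintro τ ⟨hτΔ, hτr, hτm⟩
        obtain ⟨h1, h2, h3⟩ := phi_event (i₀ := i₀) hVne hVb hVcx hVcp hUcx hΔV hτΔ
        exact ⟨h1, by rw [h2, hτr], by rw [h3, hτm]⟩
      have hCspec : ∀ τ ∈ C, τ ∉ Δ ∧ rho V τ = r ∧ ‖qpt V τ‖ = m := fun τ hτ => hτ
      have hinner := inner_collapse (i₀ := i₀) hVne hVb hVcx hVcp hUcx hΔV r m low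
        hlowspec C.ncard C hCspec hCphi rfl
      have hun : Δ ∪ S = Δ ∪ low ∪ C := by
        rw [Set.union_assoc, ← hSlowC]
      have hσmC : σm ∈ C := ⟨hS0 σm hσm, rfl, rfl⟩
      have hlowlt : low.ncard < k := by
        rw [← hcard]
        apply Set.ncard_lt_ncard ?_ (Set.toFinite S)
        constructor
        · exact Set.diff_subset
        · intro hsub
          exact (hsub hσm).2 hσmC
      have hlow0 : ∀ τ ∈ low, τ ∉ Δ := fun τ hτ => hS0 τ hτ.1
      have hlow1 : ∀ τ ∈ low, ∀ τ', τ' ∉ Δ → rho V τ' = rho V τ → ‖qpt V τ'‖ = ‖qpt V τ‖ →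
          τ' ∈ low := by
        rintro τ ⟨hτS, hτC⟩ τ' hτ'Δ he1 he2
        refine ⟨hS1 τ hτS τ' hτ'Δ he1 he2, ?_⟩
        rintro ⟨-, hr', hm'⟩
        exact hτC ⟨hS0 τ hτS, by rw [← he1, hr'], by rw [← he2, hm']⟩
      have hlow2 : ∀ τ ∈ low, ∀ τ', τ' ∉ Δ →
          (rho V τ' < rho V τ ∨ (rho V τ' = rho V τ ∧ ‖qpt V τ'‖ < ‖qpt V τ‖)) → τ' ∈ low := by
        rintro τ ⟨hτS, hτC⟩ τ' hτ'Δ hkey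
        refine ⟨hS2 τ hτS τ' hτ'Δ hkey, ?_⟩
        rintro ⟨-, hr', hm'⟩
        -- key τ' < key τ but key τ' = (r, m) which is the maximum; key τ ≤ (r,m)
        have hτle : toLex (rho V τ, ‖qpt V τ‖) ≤ toLex (r, m) := by
          by_contra hcon
          push_neg at hcon
          have h1 := hmax τ hτS hcon.le
          rw [h1] at hcon
          exact lt_irrefl _ hcon
        have hτ'lt : toLex (rho V τ', ‖qpt V τ'‖) < toLex (rho V τ, ‖qpt V τ‖) := by
          rw [Prod.Lex.lt_iff]
          exact hkey
        rw [hr', hm'] at hτ'lt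
        exact absurd (lt_of_lt_of_le hτ'lt hτle) (lt_irrefl _)
      have hrec := IH low.ncard hlowlt low hlow0 hlow1 hlow2 rfl
      rw [hun]
      exact Relation.ReflTransGen.trans hinner hrec

lemma geom_main (hn : 0 < n) (hVne : ∀ i, (V i).Nonempty)
    (hVb : ∀ i, V i ⊆ closedBall 0 Mc)
    (hVcx : ∀ i, Convex ℝ (V i)) (hVcp : ∀ i, IsCompact (V i))
    (hUcx : Convex ℝ (⋃ i, V i))
    (hΔV : ∀ σ : Finset (Fin n), σ ∈ Δ ↔ ∃ x, ∀ i ∈ σ, x ∈ V i) :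
    CollapsesTo (Set.univ : Set (Finset (Fin n))) Δ := by
  set S : Set (Finset (Fin n)) := {τ | τ ∉ Δ} with hSdef
  have h := outer_collapse (⟨0, hn⟩ : Fin n) hVne hVb hVcx hVcp hUcx hΔV S.ncard S
    (fun τ hτ => hτ) (fun τ _ τ' hτ' _ _ => hτ') (fun τ _ τ' hτ' _ => hτ') rfl
  have huniv : Δ ∪ S = Set.univ := by
    ext τ
    simp only [Set.mem_union, Set.mem_setOf_eq, Set.mem_univ, iff_true]
    exact or_not
  rwa [huniv] at h

end Chain



variable {n d : ℕ}

lemma ball_lemma {U : Fin n → Set (Euc d)} (hUop : ∀ i, IsOpen (U i)) :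
    ∀ (σ : Finset (Fin n)) (x : Euc d), (∀ i ∈ σ, x ∈ U i) →
      ∃ e > 0, ∀ i ∈ σ, closedBall x e ⊆ U i := by
  intro σ
  induction σ using Finset.induction_on with
  | empty => exact fun x _ => ⟨1, one_pos, by simp⟩
  | @insert a σ' ha IH =>
    intro x hx
    obtain ⟨e, he, hball⟩ := IH x (fun i hi => hx i (Finset.mem_insert_of_mem hi))
    obtain ⟨ε, hε, hεball⟩ :=
      Metric.isOpen_iff.1 (hUop a) x (hx a (Finset.mem_insert_self a σ'))
    refine ⟨min e (ε/2), lt_min he (by linarith), ?_⟩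
    intro i hi
    rcases Finset.mem_insert.1 hi with rfl | hi'
    · refine subset_trans ?_ hεball
      refine subset_trans (closedBall_subset_closedBall (min_le_right _ _)) ?_
      intro z hz
      rw [mem_closedBall] at hz
      rw [mem_ball]
      linarith
    · exact subset_trans (closedBall_subset_closedBall (min_le_left _ _)) (hball i hi')

lemma mem_of_ball_subset_closure {W : Set (Euc d)} (hW : Convex ℝ W) (hop : IsOpen W)
    (hne : W.Nonempty) {x : Euc d} {r : ℝ} (hr : 0 < r)
    (h : ∀ v : Euc d, ‖v‖ ≤ r → x + v ∈ closure W) : x ∈ W := by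
  obtain ⟨u₀, hu₀⟩ := hne
  set N : ℝ := ‖x - u₀‖ with hNdef
  have hN0 : 0 ≤ N := norm_nonneg _
  set D : ℝ := r + N + 1 with hDdef
  have hD0 : 0 < D := by positivity
  set a : ℝ := r / D with hadef
  have ha0 : 0 < a := by positivity
  have haD : a * D = r := by rw [hadef]; field_simp
  have ha1 : a < 1 := by
    rw [hadef, div_lt_one hD0, hDdef]
    linarith
  have h1a : (0:ℝ) < 1 - a := by linarith
  set y : Euc d := (1 - a)⁻¹ • (x - a • u₀) with hydef
  have hcombo : (1 - a) • y = x - a • u₀ := by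
    rw [hydef, smul_smul, mul_inv_cancel₀ (ne_of_gt h1a), one_smul]
  have hyx : y - x = ((1 - a)⁻¹ * a) • (x - u₀) := by
    have h2 : (1 - a) • (y - x) = a • (x - u₀) := by
      rw [smul_sub, hcombo]
      module
    have h3 := congrArg (fun z => (1 - a)⁻¹ • z) h2
    simpa [smul_smul, inv_mul_cancel₀ (ne_of_gt h1a)] using h3
  have hynorm : ‖y - x‖ ≤ r := by
    rw [hyx, norm_smul]
    have hpos : (0:ℝ) ≤ (1 - a)⁻¹ * a := by positivity
    rw [Real.norm_of_nonneg hpos]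
    rw [← hNdef]
    have haN : a * N ≤ r * (1 - a) := by
      have h7 : a * D = r := haD
      rw [hDdef] at h7
      nlinarith [ha0]
    calc (1 - a)⁻¹ * a * N = (1 - a)⁻¹ * (a * N) := by ring
      _ ≤ (1 - a)⁻¹ * (r * (1 - a)) :=
          mul_le_mul_of_nonneg_left haN (le_of_lt (inv_pos.2 h1a))
      _ = r := by field_simp
  have hy : y ∈ closure W := by
    have h4 := h (y - x) hynorm
    rw [add_sub_cancel] at h4
    exact h4
  have hu₀int : u₀ ∈ interior W := by rw [hop.interior_eq]; exact hu₀
  have h5 := hW.combo_interior_closure_mem_interior hu₀int hy ha0 (le_of_lt h1a)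
    (by ring)
  have h6 : a • u₀ + (1 - a) • y = x := by
    rw [hcombo]
    module
  rw [h6, hop.interior_eq] at h5
  exact h5

lemma construct_V (hn : 0 < n) {U : Fin n → Set (Euc d)} {Δ : Set (Finset (Fin n))}
    (hUcx : ∀ i, Convex ℝ (U i)) (hUop : ∀ i, IsOpen (U i)) (hUun : Convex ℝ (⋃ i, U i))
    (hnerve : nerveOf U = Δ) (hvert : ∀ i : Fin n, ({i} : Finset (Fin n)) ∈ Δ) :
    ∃ (V : Fin n → Set (Euc d)) (Mc : ℝ),
      (∀ i, (V i).Nonempty) ∧ (∀ i, V i ⊆ closedBall 0 Mc) ∧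
      (∀ i, Convex ℝ (V i)) ∧ (∀ i, IsCompact (V i)) ∧ Convex ℝ (⋃ i, V i) ∧
      (∀ σ : Finset (Fin n), σ ∈ Δ ↔ ∃ x, ∀ i ∈ σ, x ∈ V i) := by
  classical
  set i₀ : Fin n := ⟨0, hn⟩ with hi₀def
  -- some U i is nonempty
  have hexne : ∃ i, (U i).Nonempty := by
    have h := hvert i₀
    rw [← hnerve] at h
    exact h.1
  -- membership characterization of Δ
  have hmemΔ : ∀ σ : Finset (Fin n), σ ∈ Δ ↔ ∃ x, ∀ i ∈ σ, x ∈ U i := by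
    intro σ
    rw [← hnerve]
    exact ⟨fun h => h.2, fun h => ⟨hexne, h⟩⟩
  -- witness function
  set w : Finset (Fin n) → Euc d :=
    fun σ => if h : ∃ x, ∀ i ∈ σ, x ∈ U i then h.choose else 0 with hwdef
  have hw : ∀ σ ∈ Δ, ∀ i ∈ σ, w σ ∈ U i := by
    intro σ hσ
    have h := (hmemΔ σ).1 hσ
    rw [hwdef]
    simp only [dif_pos h]
    exact h.choose_spec
  -- ball radii
  set eps : Finset (Fin n) → ℝ :=
    fun σ => if h : ∃ e > 0, ∀ i ∈ σ, closedBall (w σ) e ⊆ U i then h.choose else 1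
    with hepsdef
  have heps : ∀ σ ∈ Δ, 0 < eps σ ∧ ∀ i ∈ σ, closedBall (w σ) (eps σ) ⊆ U i := by
    intro σ hσ
    have hex : ∃ e > 0, ∀ i ∈ σ, closedBall (w σ) e ⊆ U i :=
      ball_lemma hUop σ (w σ) (hw σ hσ)
    rw [hepsdef]
    simp only [dif_pos hex]
    exact ⟨hex.choose_spec.1, hex.choose_spec.2⟩
  -- minimum radius over Δ
  have hΔfin : (Δ : Set (Finset (Fin n))).Finite := Set.toFinite _
  have hΔne : Δ.Nonempty := ⟨{i₀}, hvert i₀⟩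
  obtain ⟨σstar, hσstar, hσstarmin⟩ :=
    Finset.exists_min_image hΔfin.toFinset eps (by
      rw [Set.Finite.toFinset_nonempty]; exact hΔne)
  rw [Set.Finite.mem_toFinset] at hσstar
  set lam1 : ℝ := eps σstar with hlam1def
  have hlam1 : 0 < lam1 := (heps σstar hσstar).1
  have hlam1le : ∀ σ ∈ Δ, lam1 ≤ eps σ := by
    intro σ hσ
    exact hσstarmin σ (by rwa [Set.Finite.mem_toFinset])
  -- the compact core
  set Wset : Set (Euc d) := w '' {σ | σ ∈ Δ ∧ σ.Nonempty} with hWsetdef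
  have hWfin : Wset.Finite := (Set.toFinite _).image w
  have hWne : Wset.Nonempty := ⟨w {i₀}, ⟨{i₀}, ⟨hvert i₀, Finset.singleton_nonempty i₀⟩, rfl⟩⟩
  set C : Set (Euc d) := convexHull ℝ Wset with hCdef
  have hCcomp : IsCompact C := hWfin.isCompact_convexHull (𝕜 := ℝ)
  have hCcx : Convex ℝ C := convex_convexHull ℝ Wset
  have hCsubU : C ⊆ ⋃ i, U i := by
    apply convexHull_min ?_ hUun
    rintro x ⟨σ, ⟨hσΔ, hσne⟩, rfl⟩
    obtain ⟨i, hi⟩ := hσne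
    exact mem_iUnion.2 ⟨i, hw σ hσΔ i hi⟩
  -- Lebesgue number
  obtain ⟨lb, hlb, hleb⟩ := lebesgue_number_lemma_of_metric hCcomp hUop hCsubU
  set lamh : ℝ := (min lam1 lb) / 2 with hlamhdef
  have hlamh0 : 0 < lamh := by
    rw [hlamhdef]
    have := lt_min hlam1 hlb
    positivity
  have hlamh_lam1 : lamh ≤ lam1 := by
    rw [hlamhdef]
    have h1 : min lam1 lb ≤ lam1 := min_le_left _ _
    linarith
  have hlamh_lb : lamh < lb := by
    rw [hlamhdef]
    have h1 : min lam1 lb ≤ lb := min_le_right _ _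
    linarith
  -- the compact convex sets
  set V : Fin n → Set (Euc d) :=
    fun i => {x | x ∈ C ∧ ∀ v : Euc d, ‖v‖ ≤ lamh → x + v ∈ closure (U i)} with hVdef
  have hVsubU : ∀ i, V i ⊆ U i := by
    intro i x hx
    exact mem_of_ball_subset_closure (hUcx i) (hUop i)
      (by
        obtain ⟨z, hz⟩ := (hmemΔ {i}).1 (hvert i)
        exact ⟨z, hz i (Finset.mem_singleton_self i)⟩)
      hlamh0 hx.2
  have hwmem : ∀ σ, σ ∈ Δ → σ.Nonempty → ∀ i ∈ σ, w σ ∈ V i := by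
    intro σ hσ hσne i hi
    constructor
    · exact subset_convexHull ℝ Wset ⟨σ, ⟨hσ, hσne⟩, rfl⟩
    · intro v hv
      apply subset_closure
      apply (heps σ hσ).2 i hi
      rw [mem_closedBall]
      have : dist (w σ + v) (w σ) = ‖v‖ := by
        rw [dist_eq_norm]
        simp
      rw [this]
      exact le_trans hv (le_trans hlamh_lam1 (hlam1le σ hσ))
  have hVne : ∀ i, (V i).Nonempty :=
    fun i => ⟨w {i}, hwmem {i} (hvert i) (Finset.singleton_nonempty i) i
      (Finset.mem_singleton_self i)⟩
  have hVcx : ∀ i, Convex ℝ (V i) := by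
    intro i x hx y hy a b ha hb hab
    constructor
    · exact hCcx hx.1 hy.1 ha hb hab
    · intro v hv
      have h1 : a • x + b • y + v = a • (x + v) + b • (y + v) := by
        have h2 : a • v + b • v = v := by
          rw [← add_smul, hab, one_smul]
        rw [smul_add, smul_add,
          show a • x + a • v + (b • y + b • v) = a • x + b • y + (a • v + b • v) from by abel,
          h2]
      rw [h1]
      exact (hUcx i).closure (hx.2 v hv) (hy.2 v hv) ha hb hab
  have hVclosed : ∀ i, IsClosed (V i) := by
    intro i
    have h1 : V i = C ∩ ⋂ v ∈ closedBall (0 : Euc d) lamh,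
        (fun x => x + v) ⁻¹' closure (U i) := by
      ext x
      simp only [hVdef, Set.mem_setOf_eq, Set.mem_inter_iff, Set.mem_iInter,
        Set.mem_preimage, mem_closedBall, dist_zero_right]
    rw [h1]
    refine IsClosed.inter hCcomp.isClosed ?_
    refine isClosed_biInter ?_
    intro v _
    exact IsClosed.preimage (continuous_add_right v) isClosed_closure
  have hVcp : ∀ i, IsCompact (V i) := by
    intro i
    exact hCcomp.of_isClosed_subset (hVclosed i) (fun x hx => hx.1)
  obtain ⟨Mc, hMc⟩ := hCcomp.isBounded.subset_closedBall (0 : Euc d)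
  have hVb : ∀ i, V i ⊆ closedBall 0 Mc := fun i =>
    subset_trans (fun x hx => hx.1) hMc
  have hUnion : ⋃ i, V i = C := by
    apply subset_antisymm
    · exact Set.iUnion_subset (fun i x hx => hx.1)
    · intro x hx
      obtain ⟨i, hi⟩ := hleb x hx
      refine mem_iUnion.2 ⟨i, hx, ?_⟩
      intro v hv
      apply subset_closure
      apply hi
      rw [mem_ball]
      have : dist (x + v) x = ‖v‖ := by rw [dist_eq_norm]; simp
      rw [this]
      exact lt_of_le_of_lt hv hlamh_lb
  have hUcxV : Convex ℝ (⋃ i, V i) := by rw [hUnion]; exact hCcx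
  refine ⟨V, Mc, hVne, hVb, hVcx, hVcp, hUcxV, ?_⟩
  intro σ
  constructor
  · intro hσ
    rcases σ.eq_empty_or_nonempty with rfl | hσne
    · exact ⟨0, by simp⟩
    · exact ⟨w σ, fun i hi => hwmem σ hσ hσne i hi⟩
  · rintro ⟨x, hx⟩
    rw [hmemΔ]
    exact ⟨x, fun i hi => hVsubU i (hx i hi)⟩

end CURproof

/-- **Theorem.** The Alexander dual of a convex union representable complex
with `n ≥ 1` vertices is collapsible. -/
theorem alexDual_collapsible_of_CUR {n : ℕ} (hn : 1 ≤ n)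
    (Δ : Set (Finset (Fin n))) (hΔ : IsSimplicialComplex Δ)
    (hvert : ∀ i : Fin n, ({i} : Finset (Fin n)) ∈ Δ)
    (hcur : ConvexUnionRepresentable Δ) :
    Collapsible (alexDual Δ) := by
  obtain ⟨d, U, hUcx, hUop, hUun, hnerve⟩ := hcur
  obtain ⟨V, Mc, hVne, hVb, hVcx, hVcp, hUcxV, hΔV⟩ :=
    CURproof.construct_V hn hUcx hUop hUun hnerve hvert
  have hchain : CollapsesTo (Set.univ : Set (Finset (Fin n))) Δ :=
    CURproof.geom_main hn hVne hVb hVcx hVcp hUcxV hΔV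
  have hdual := CURproof.dual_chain (fun σ _ τ _ => Set.mem_univ τ) hchain
  rw [CURproof.alexDual_univ] at hdual
  exact hdual
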